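/- Let G be a finite group, I a finite set, and σ a permutation of I. For g ∈ G^I, define ν^σ(g) ∈ G^I by ν^σ(g)_{σ^m(i_a)} = g_{σ^m(i_a)} g_{σ^{m-1}(i_a)} ⋯ g_{i_a}, where i_a is a chosen representative of each σ-orbit a and 0 ≤ m ≤ |a|-1. Then in the wreath product G^I ⋊ Σ_I one has ν^σ(g)⁻¹ · (gσ) · ν^σ(g) = ε_𝔤 σ, where 𝔤_a = g_{σ^{|a|-1}(i_a)} ⋯ g_{σ(i_a)} g_{i_a} is the cycle product and ε_𝔤 ∈ G^I has component 𝔤_a at index i_a and 1 elsewhere. -/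
import Mathlib


/-- The action of `Σ_I` on `G^I` used to form the wreath product `G^I ⋊ Σ_I`:
`(h^σ)_i = h_{σ i}`, and the semidirect-product convention of Mathlib
`(g, σ) * (h, τ) = (g * φ σ h, σ τ)` realizes `gσ · hτ = g h^{σ⁻¹} στ`. -/
def wrAct (G I : Type*) [Group G] : Equiv.Perm I →* MulAut (I → G) where
  toFun σ :=
    { toFun := fun g i => g (σ⁻¹ i)
      invFun := fun g i => g (σ i)
      left_inv := fun g => funext fun i => by simp
      right_inv := fun g => funext fun i => by simp
      map_mul' := fun g h => rfl }
  map_one' := by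
    ext g i
    simp
  map_mul' := fun σ τ => by
    ext g i
    simp [Equiv.Perm.mul_apply]

/-- The wreath product `G^I ⋊ Σ_I`. -/
abbrev WreathProduct (G I : Type*) [Group G] : Type _ :=
  (I → G) ⋊[wrAct G I] Equiv.Perm I

/-- The (ordered) partial cycle product
`g_{σ^{n-1}(i)} · g_{σ^{n-2}(i)} ⋯ g_{σ(i)} · g_i` of `g : I → G` along the
`σ`-trajectory of `i`; for `n` the size of the `σ`-orbit of `i` this is the
cycle product `ψ^σ(g)_a` of the orbit `a` of `i` with representative `i`. -/
def cycProd {G I : Type*} [Group G] (σ : Equiv.Perm I) (g : I → G) (i : I) (n : ℕ) : G :=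
  ((List.range n).map fun k => g ((σ ^ (n - 1 - k)) i)).prod

/-- The element `ν^σ(g) ∈ G^I`, relative to a choice `rep` of orbit
representatives and the "position" function `m` (so `i = σ^(m i) (rep i)`):
`ν^σ(g)_{σ^m(i_a)} = g_{σ^m(i_a)} ⋯ g_{σ(i_a)} g_{i_a}`. -/
def nuFun {G I : Type*} [Group G] (σ : Equiv.Perm I) (g : I → G)
    (rep : I → I) (m : I → ℕ) : I → G :=
  fun i => cycProd σ g (rep i) (m i + 1)

/-- The element `ε_𝔤 ∈ G^I` whose component at each orbit representative is the
cycle product of that orbit and is `1` elsewhere. -/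
noncomputable def epsFun {G I : Type*} [Group G] [DecidableEq I] (σ : Equiv.Perm I) (g : I → G)
    (rep : I → I) : I → G :=
  fun i => if rep i = i then cycProd σ g i (Function.minimalPeriod (⇑σ) i) else 1

open SemidirectProduct

lemma cycProd_succ {G I : Type*} [Group G] (σ : Equiv.Perm I) (g : I → G) (i : I) (n : ℕ) :
    cycProd σ g i (n + 1) = g ((σ ^ n) i) * cycProd σ g i n := by
  unfold cycProd
  rw [List.range_succ_eq_map, List.map_cons, List.prod_cons, List.map_map]
  congr 1
  apply congrArg
  apply List.map_congr_left
  intro a _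
  simp only [Function.comp_apply]
  congr 3
  omega


/-!
STATEMENT 2: In the wreath product `G^I ⋊ Σ_I`,
`ν^σ(g)⁻¹ · (gσ) · ν^σ(g) = ε_𝔤 σ`, where `𝔤_a` is the cycle product of `g`
along the `σ`-orbit `a` (with chosen representative `rep i` for the orbit of
`i`, and `i = σ^(m i)(rep i)` with `m i < |orbit|`).
-/
theorem stmt2 {G I : Type*} [Group G] [Fintype I] [DecidableEq I]
    (σ : Equiv.Perm I) (g : I → G) (rep : I → I) (m : I → ℕ)
    (hrep : ∀ i, rep (σ i) = rep i)
    (hm : ∀ i, (σ ^ m i) (rep i) = i)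
    (hmlt : ∀ i, m i < Function.minimalPeriod (⇑σ) (rep i)) :
    (inl (φ := wrAct G I) (nuFun σ g rep m))⁻¹
        * (inl (φ := wrAct G I) g * inr (φ := wrAct G I) σ)
        * inl (φ := wrAct G I) (nuFun σ g rep m)
      = inl (φ := wrAct G I) (epsFun σ g rep) * inr (φ := wrAct G I) σ := by
  set ν := nuFun σ g rep m with hν
  have key : ν⁻¹ * g * (wrAct G I σ) ν = epsFun σ g rep := by
    funext i
    have hφ : ((wrAct G I σ) ν) i = ν (σ⁻¹ i) := rfl
    have hcomp : (ν⁻¹ * g * (wrAct G I σ) ν) i = (ν i)⁻¹ * g i * ν (σ⁻¹ i) := rfl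
    rw [hcomp]
    set j := σ⁻¹ i with hj
    set N := Function.minimalPeriod (⇑σ) (rep i) with hN
    have hrepj : rep j = rep i := by
      have := hrep j
      rw [show σ j = i by simp [hj]] at this
      exact this.symm
    have hmj : (σ ^ m j) (rep i) = j := by rw [← hrepj]; exact hm j
    have hstep : (σ ^ (m j + 1)) (rep i) = i := by
      rw [pow_succ', Equiv.Perm.mul_apply, hmj]
      simp [hj]
    have hmjlt : m j < N := by rw [hN, ← hrepj]; exact hmlt j
    have hνi : ν i = g i * cycProd σ g (rep i) (m i) := by
      rw [hν]; show cycProd σ g (rep i) (m i + 1) = _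
      rw [cycProd_succ, hm i]
    have hνj : ν j = cycProd σ g (rep i) (m j + 1) := by
      rw [hν]; show cycProd σ g (rep j) (m j + 1) = _; rw [hrepj]
    by_cases h0 : m i = 0
    · -- i is the representative
      have hri : rep i = i := by have := hm i; rwa [h0, pow_zero] at this
      have hdvd : N ∣ m j + 1 := by
        rw [hN]
        apply Function.IsPeriodicPt.minimalPeriod_dvd
        show (⇑σ)^[m j + 1] (rep i) = rep i
        rw [← Equiv.Perm.coe_pow, hstep]
        exact hri.symm
      have hNeq : m j + 1 = N := le_antisymm hmjlt (Nat.le_of_dvd (Nat.succ_pos _) hdvd)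
      rw [hνi, hνj, h0, hNeq]
      simp [cycProd, epsFun, hri, hN]
    · -- i is not the representative
      have hri : rep i ≠ i := by
        intro hri
        have hp : Function.IsPeriodicPt (⇑σ) (m i) (rep i) := by
          show (⇑σ)^[m i] (rep i) = rep i
          rw [← Equiv.Perm.coe_pow, hm i]
          exact hri.symm
        have h4 := Nat.le_of_dvd (Nat.pos_of_ne_zero h0)
          (Function.IsPeriodicPt.minimalPeriod_dvd hp)
        have h5 : m i < Function.minimalPeriod (⇑σ) (rep i) := hmlt i
        omega
      have heq : m j + 1 = m i := by
        rcases lt_or_eq_of_le (Nat.succ_le_of_lt hmjlt) with hlt | hEq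
        · have hper : (⇑σ)^[m j + 1] (rep i) = (⇑σ)^[m i] (rep i) := by
            rw [← Equiv.Perm.coe_pow, ← Equiv.Perm.coe_pow, hstep, hm i]
          exact Function.iterate_injOn_Iio_minimalPeriod hlt (hmlt i) hper
        · exfalso
          apply hri
          have hfix : (⇑σ)^[N] (rep i) = rep i := Function.iterate_minimalPeriod
          rw [← hEq, ← Equiv.Perm.coe_pow, hstep] at hfix
          exact hfix.symm
      rw [hνi, hνj, heq]
      simp [epsFun, hri]
  calc (inl (φ := wrAct G I) ν)⁻¹ * (inl (φ := wrAct G I) g * inr (φ := wrAct G I) σ)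
          * inl (φ := wrAct G I) ν
      = (inl (φ := wrAct G I) ν)⁻¹ * inl (φ := wrAct G I) g
          * (inr (φ := wrAct G I) σ * inl (φ := wrAct G I) ν) := by group
    _ = (inl (φ := wrAct G I) ν)⁻¹ * inl (φ := wrAct G I) g
          * (inl (φ := wrAct G I) ((wrAct G I σ) ν) * inr (φ := wrAct G I) σ) := by
          rw [inl_aut, map_inv]; group
    _ = inl (φ := wrAct G I) (ν⁻¹ * g * (wrAct G I σ) ν) * inr (φ := wrAct G I) σ := by
          rw [map_mul, map_mul, map_inv]; group
    _ = _ := by rw [key]
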